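/- Let $X$ be a Banach space of entire functions containing the constant function $1$, on which all point evaluations $f \mapsto f(z_0)$ are bounded. Let $g$ be entire with $g(0)=0$ and suppose $T_g f(z) = \int_0^z f g'\,d\zeta$ defines a bounded operator on $X$. If $\lambda \neq 0$ is in the resolvent set of $T_g$, then $e^{g/\lambda} \in X$, and in fact $e^{g/\lambda} = (I - \frac{1}{\lambda}T_g)^{-1} 1$. -/

import Mathlib

open intervalIntegral Complex

/-- Derivative of an entire function is differentiable. -/
lemma entire_deriv_diff {g : ℂ → ℂ} (hg : Differentiable ℂ g) :
    Differentiable ℂ (deriv g) := by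
  have h : AnalyticOnNhd ℂ g Set.univ :=
    hg.differentiableOn.analyticOnNhd isOpen_univ
  have := h.deriv
  intro z
  exact ((this z trivial).differentiableAt)

/-- Key analytic lemma: an entire solution of the fixed point equation is `exp (g/lam)`. -/
lemma key_lemma {f g : ℂ → ℂ} (hf : Differentiable ℂ f) (hg : Differentiable ℂ g)
    (hg0 : g 0 = 0) {lam : ℂ} (hlam : lam ≠ 0)
    (hfe : ∀ z : ℂ, f z - lam⁻¹ * ∫ t in (0:ℝ)..1,
      f ((t : ℂ) * z) * deriv g ((t : ℂ) * z) * z = 1) :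
    ∀ z : ℂ, f z = Complex.exp (g z / lam) := by
  have hdg : Differentiable ℂ (deriv g) := entire_deriv_diff hg
  -- f 0 = 1
  have hf0 : f 0 = 1 := by
    have := hfe 0
    simpa using this
  -- derivative identity away from 0
  have hderiv : ∀ z : ℂ, z ≠ 0 → lam * deriv f z = f z * deriv g z := by
    intro z hz
    -- ψ : ℝ → ℂ
    set ψ : ℝ → ℂ := fun u => f ((u : ℂ) * z) * deriv g ((u : ℂ) * z) * z with hψdef
    have hψcont : Continuous ψ := by
      apply Continuous.mul
      apply Continuous.mul
      · exact (hf.continuous).comp (by continuity)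
      · exact (hdg.continuous).comp (by continuity)
      · exact continuous_const
    -- the claim : for all real s, lam * (f (s z) - 1) = ∫ u in 0..s, ψ u
    have claim : ∀ s : ℝ, lam * (f ((s : ℂ) * z) - 1) = ∫ u in (0:ℝ)..s, ψ u := by
      intro s
      have h1 := hfe ((s : ℂ) * z)
      have h2 : lam * (f ((s : ℂ) * z) - 1)
          = ∫ t in (0:ℝ)..1, f ((t : ℂ) * ((s:ℂ) * z)) * deriv g ((t : ℂ) * ((s:ℂ)*z))
              * ((s:ℂ) * z) := by
        have : f ((s : ℂ) * z) - 1 = lam⁻¹ * ∫ t in (0:ℝ)..1,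
            f ((t : ℂ) * ((s:ℂ)*z)) * deriv g ((t : ℂ) * ((s:ℂ)*z)) * ((s:ℂ)*z) := by
          linear_combination h1
        rw [this, ← mul_assoc, mul_inv_cancel₀ hlam, one_mul]
      rw [h2]
      have h3 : (∫ u in (0:ℝ)..s, ψ u) = s • ∫ t in (0:ℝ)..1, ψ (s * t) := by
        rw [intervalIntegral.smul_integral_comp_mul_left ψ s, mul_zero, mul_one]
      rw [h3, ← intervalIntegral.integral_smul]
      apply intervalIntegral.integral_congr
      intro t _
      show f (↑t * (↑s * z)) * deriv g (↑t * (↑s * z)) * (↑s * z)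
          = s • (f (↑(s * t) * z) * deriv g (↑(s * t) * z) * z)
      push_cast
      rw [real_smul]
      push_cast
      ring_nf
    -- FTC : RHS has derivative ψ s
    have hΦ : ∀ s : ℝ, HasDerivAt (fun s : ℝ => ∫ u in (0:ℝ)..s, ψ u) (ψ s) s := by
      intro s
      exact intervalIntegral.integral_hasDerivAt_right
        (hψcont.intervalIntegrable 0 s)
        (hψcont.stronglyMeasurableAtFilter _ _)
        hψcont.continuousAt
    -- LHS has derivative lam * (deriv f (s z) * z)
    have hL : ∀ s : ℝ, HasDerivAt (fun s : ℝ => lam * (f ((s:ℂ) * z) - 1))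
        (lam * (deriv f ((s:ℂ) * z) * z)) s := by
      intro s
      have h1 : HasDerivAt (fun w : ℂ => f (w * z)) (deriv f ((s:ℂ) * z) * z) ((s:ℂ)) := by
        have hfz : HasDerivAt f (deriv f ((s:ℂ) * z)) ((s:ℂ) * z) :=
          (hf ((s:ℂ) * z)).hasDerivAt
        exact HasDerivAt.comp (s:ℂ) hfz (hasDerivAt_mul_const z)
      have h2 := h1.comp_ofReal
      exact ((h2.sub_const 1).const_mul lam)
    -- conclude at s = 1
    have heq : (fun s : ℝ => lam * (f ((s:ℂ) * z) - 1))
        = fun s : ℝ => ∫ u in (0:ℝ)..s, ψ u := funext claim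
    have h4 : HasDerivAt (fun s : ℝ => ∫ u in (0:ℝ)..s, ψ u)
        (lam * (deriv f (((1:ℝ):ℂ) * z) * z)) 1 := heq ▸ hL 1
    have h5 : lam * (deriv f (((1:ℝ):ℂ) * z) * z) = ψ 1 := h4.unique (hΦ 1)
    have h6 : lam * (deriv f z * z) = f z * deriv g z * z := by
      simpa [hψdef] using h5
    exact mul_right_cancel₀ hz (by linear_combination h6)
  -- h := f * exp(-g/lam) has zero derivative away from 0
  set h : ℂ → ℂ := fun z => f z * Complex.exp (-g z / lam) with hhdef
  have hhdiff : Differentiable ℂ h := by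
    apply hf.mul
    apply Complex.differentiable_exp.comp
    exact (hg.neg.div_const lam)
  have hderivh : ∀ z : ℂ, z ≠ 0 → deriv h z = 0 := by
    intro z hz
    have hE : HasDerivAt (fun w => Complex.exp (-g w / lam))
        (-deriv g z / lam * Complex.exp (-g z / lam)) z := by
      have hgz : HasDerivAt (fun w => -g w / lam) (-deriv g z / lam) z :=
        (((hg z).hasDerivAt).neg).div_const lam
      have := (Complex.hasDerivAt_exp (-g z / lam)).comp z hgz
      exact this.congr_deriv (by ring)
    have hfz : HasDerivAt f (deriv f z) z := (hf z).hasDerivAt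
    have hh : HasDerivAt h
        (deriv f z * Complex.exp (-g z / lam)
          + f z * (-deriv g z / lam * Complex.exp (-g z / lam))) z := hfz.mul hE
    have key := hderiv z hz
    have : deriv f z * Complex.exp (-g z / lam)
          + f z * (-deriv g z / lam * Complex.exp (-g z / lam)) = 0 := by
      have hdf : deriv f z = f z * deriv g z / lam := by
        field_simp at key ⊢
        linear_combination key
      rw [hdf]
      field_simp
      ring
    rw [← this]
    exact hh.deriv
  -- deriv h = 0 everywhere by continuity
  have hcont : Continuous (deriv h) := (entire_deriv_diff hhdiff).continuous
  have hall : ∀ z : ℂ, deriv h z = 0 := by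
    have hd : Dense ({0}ᶜ : Set ℂ) := dense_compl_singleton 0
    have := Continuous.ext_on hd hcont continuous_const
      (fun z hz => hderivh z hz)
    intro z
    exact congrFun this z
  -- h is constant = h 0 = 1
  intro z
  have hc : h z = h 0 := is_const_of_deriv_eq_zero hhdiff hall z 0
  have h0 : h 0 = 1 := by
    simp [hhdef, hf0, hg0]
  have hz1 : f z * Complex.exp (-g z / lam) = 1 := hc.trans h0
  have : -g z / lam = -(g z / lam) := by ring
  rw [this, Complex.exp_neg] at hz1
  exact (mul_inv_eq_one₀ (Complex.exp_ne_zero _)).mp hz1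

theorem stmt16 {X : Type*} [NormedAddCommGroup X] [NormedSpace ℂ X] [CompleteSpace X]
    (ι : X →ₗ[ℂ] (ℂ → ℂ)) (hinj : Function.Injective ι)
    (hdiff : ∀ x : X, Differentiable ℂ (ι x))
    (heval : ∀ z : ℂ, ∃ C : ℝ, ∀ x : X, ‖ι x z‖ ≤ C * ‖x‖)
    (one : X) (hone : ι one = fun _ => 1)
    (g : ℂ → ℂ) (hg : Differentiable ℂ g) (hg0 : g 0 = 0)
    (T : X →L[ℂ] X)
    (hT : ∀ (x : X) (z : ℂ),
      ι (T x) z = ∫ t in (0:ℝ)..1, ι x ((t : ℂ) * z) * deriv g ((t : ℂ) * z) * z)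
    (lam : ℂ) (hlam : lam ≠ 0) (hres : lam ∈ resolventSet ℂ T) :
    ∃ x : X, (∀ z : ℂ, ι x z = Complex.exp (g z / lam)) ∧ x - lam⁻¹ • T x = one := by
  have hu : IsUnit (algebraMap ℂ (X →L[ℂ] X) lam - T) := hres
  set u := hu.unit with hudef
  set x : X := (↑u⁻¹ : X →L[ℂ] X) (lam • one) with hxdef
  have hux : (↑u : X →L[ℂ] X) x = lam • one := by
    have : (↑u : X →L[ℂ] X) ((↑u⁻¹ : X →L[ℂ] X) (lam • one))
        = ((↑u * ↑u⁻¹ : X →L[ℂ] X)) (lam • one) := rfl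
    rw [hxdef, this, u.mul_inv]
    rfl
  have huval : (↑u : X →L[ℂ] X) = algebraMap ℂ (X →L[ℂ] X) lam - T := hu.unit_spec
  have hmain : lam • x - T x = lam • one := by
    have := hux
    rw [huval] at this
    simpa [ContinuousLinearMap.sub_apply, Algebra.algebraMap_eq_smul_one,
      ContinuousLinearMap.smul_apply, ContinuousLinearMap.one_apply] using this
  have heqn : x - lam⁻¹ • T x = one := by
    have := congrArg (fun v => lam⁻¹ • v) hmain
    simpa [smul_sub, smul_smul, inv_mul_cancel₀ hlam] using this
  refine ⟨x, ?_, heqn⟩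
  -- apply the key lemma to f = ι x
  have hfe : ∀ z : ℂ, ι x z - lam⁻¹ * ∫ t in (0:ℝ)..1,
      ι x ((t : ℂ) * z) * deriv g ((t : ℂ) * z) * z = 1 := by
    intro z
    have := congrArg ι heqn
    rw [map_sub, map_smul] at this
    have h2 := congrFun this z
    simp only [Pi.sub_apply, Pi.smul_apply, smul_eq_mul, hone] at h2
    rw [← hT x z]
    exact h2
  exact key_lemma (hdiff x) hg hg0 hlam hfe
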